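/- Let σ_p be an m-simplex produced after p longest-edge bisections of an m-simplex σ₀ in ℝⁿ, with barycenter κ_p. Then for every point x in σ_p, ‖x − κ_p‖ ≤ (m/(m+1))·(√3/2)^{⌊p/m⌋}·diam(σ₀). -/

import Mathlib

open Finset

/-- `Bisect v w` : the simplex with vertices `w` is one of the two elements of the
longest-edge bisection of the simplex with vertices `v`. -/
def Bisect {n m : ℕ} (v w : Fin (m + 1) → EuclideanSpace ℝ (Fin n)) : Prop :=
  ∃ i j : Fin (m + 1), i ≠ j ∧
    (∀ p q : Fin (m + 1), ‖v p - v q‖ ≤ ‖v i - v j‖) ∧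
    (w = Function.update v i (midpoint ℝ (v i) (v j)) ∨
     w = Function.update v j (midpoint ℝ (v i) (v j)))

section Aux

variable {n : ℕ}

lemma sqrt3_le_two : Real.sqrt 3 ≤ 2 := by
  rw [show (2:ℝ) = Real.sqrt 4 by
    rw [show (4:ℝ) = 2^2 by norm_num, Real.sqrt_sq (by norm_num)]]
  exact Real.sqrt_le_sqrt (by norm_num)

lemma median_le (a b c : EuclideanSpace ℝ (Fin n))
    (h1 : ‖a - c‖ ≤ ‖a - b‖) (h2 : ‖b - c‖ ≤ ‖a - b‖) :
    ‖midpoint ℝ a b - c‖ ≤ Real.sqrt 3 / 2 * ‖a - b‖ := by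
  have hpar := parallelogram_law_with_norm ℝ (a - c) (b - c)
  have hmid : midpoint ℝ a b - c = (2⁻¹ : ℝ) • ((a - c) + (b - c)) := by
    rw [midpoint_eq_smul_add]
    rw [show (⅟(2:ℝ)) = (2⁻¹:ℝ) by norm_num]
    module
  have hsub : (a - c) - (b - c) = a - b := by abel
  rw [hsub] at hpar
  have hnorm : ‖midpoint ℝ a b - c‖ = 2⁻¹ * ‖(a - c) + (b - c)‖ := by
    rw [hmid, norm_smul, Real.norm_eq_abs]; norm_num
  have hsq : ‖midpoint ℝ a b - c‖ ^ 2 ≤ (Real.sqrt 3 / 2 * ‖a - b‖) ^ 2 := by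
    have h3 : Real.sqrt 3 ^ 2 = 3 := Real.sq_sqrt (by norm_num)
    have hn1 : (0:ℝ) ≤ ‖a - c‖ := norm_nonneg _
    have hn2 : (0:ℝ) ≤ ‖b - c‖ := norm_nonneg _
    rw [hnorm]
    nlinarith [norm_nonneg ((a-c)+(b-c)), norm_nonneg (a-b)]
  calc ‖midpoint ℝ a b - c‖ = Real.sqrt (‖midpoint ℝ a b - c‖ ^ 2) := by
        rw [Real.sqrt_sq (norm_nonneg _)]
    _ ≤ Real.sqrt ((Real.sqrt 3 / 2 * ‖a - b‖) ^ 2) := Real.sqrt_le_sqrt hsq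
    _ = Real.sqrt 3 / 2 * ‖a - b‖ := Real.sqrt_sq (by positivity)

/-- one edge analysis for the updated vertex family -/
lemma update_inv {m : ℕ} {v : Fin (m+1) → EuclideanSpace ℝ (Fin n)}
    {μ : EuclideanSpace ℝ (Fin n)} {c : ℝ} (r : Fin (m+1)) (S : Finset (Fin (m+1)))
    (hμ : ∀ q, ‖μ - v q‖ ≤ c)
    (hS : ∀ p q, p ∉ S → ‖v p - v q‖ ≤ c) :
    ∀ p q, p ∉ S.erase r →
      ‖Function.update v r μ p - Function.update v r μ q‖ ≤ c := by
  have hc : 0 ≤ c := le_trans (norm_nonneg _) (hμ r)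
  intro p q hp
  rcases eq_or_ne p r with rfl | hpne
  · rcases eq_or_ne q p with rfl | hq
    · simp [hc]
    · rw [Function.update_self, Function.update_of_ne hq]; exact hμ q
  · have hpS : p ∉ S := fun h => hp (Finset.mem_erase.mpr ⟨hpne, h⟩)
    rw [Function.update_of_ne hpne]
    rcases eq_or_ne q r with rfl | hq
    · rw [Function.update_self, norm_sub_rev]; exact hμ p
    · rw [Function.update_of_ne hq]; exact hS p q hpS

lemma bisect_mono {m : ℕ} {v w : Fin (m+1) → EuclideanSpace ℝ (Fin n)}
    (hb : Bisect v w) {d : ℝ} (hd : ∀ p q, ‖v p - v q‖ ≤ d) :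
    ∀ p q, ‖w p - w q‖ ≤ d := by
  obtain ⟨i, j, hij, hmax, hw⟩ := hb
  have hμ : ∀ q, ‖midpoint ℝ (v i) (v j) - v q‖ ≤ d := by
    intro q
    calc ‖midpoint ℝ (v i) (v j) - v q‖ ≤ Real.sqrt 3 / 2 * ‖v i - v j‖ :=
          median_le _ _ _ (hmax i q) (hmax j q)
      _ ≤ 1 * ‖v i - v j‖ := by
          apply mul_le_mul_of_nonneg_right _ (norm_nonneg _)
          nlinarith [sqrt3_le_two]
      _ ≤ d := by rw [one_mul]; exact hd i j
  have hS : ∀ p q, p ∉ (∅ : Finset (Fin (m+1))) → ‖v p - v q‖ ≤ d :=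
    fun p q _ => hd p q
  rcases hw with rfl | rfl
  · exact fun p q => update_inv i ∅ hμ hS p q (by simp)
  · exact fun p q => update_inv j ∅ hμ hS p q (by simp)

lemma bisect_key {m : ℕ} {v w : Fin (m+1) → EuclideanSpace ℝ (Fin n)}
    (hb : Bisect v w) {d : ℝ} (hd : ∀ p q, ‖v p - v q‖ ≤ d)
    (S : Finset (Fin (m+1)))
    (hS : ∀ p q, p ∉ S → ‖v p - v q‖ ≤ Real.sqrt 3 / 2 * d) :
    ∃ T : Finset (Fin (m+1)), T.card ≤ S.card - 1 ∧
      ∀ p q, p ∉ T → ‖w p - w q‖ ≤ Real.sqrt 3 / 2 * d := by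
  obtain ⟨i, j, hij, hmax, hw⟩ := hb
  have hμ : ∀ q, ‖midpoint ℝ (v i) (v j) - v q‖ ≤ Real.sqrt 3 / 2 * d := by
    intro q
    calc ‖midpoint ℝ (v i) (v j) - v q‖ ≤ Real.sqrt 3 / 2 * ‖v i - v j‖ :=
          median_le _ _ _ (hmax i q) (hmax j q)
      _ ≤ Real.sqrt 3 / 2 * d := by
          apply mul_le_mul_of_nonneg_left (hd i j) (by positivity)
  by_cases hcase : ‖v i - v j‖ ≤ Real.sqrt 3 / 2 * d
  · -- already small: all edges short, take T = ∅
    have hS' : ∀ p q, p ∉ (∅ : Finset (Fin (m+1))) → ‖v p - v q‖ ≤ Real.sqrt 3 / 2 * d :=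
      fun p q _ => le_trans (hmax p q) hcase
    refine ⟨∅, by simp, ?_⟩
    rcases hw with rfl | rfl
    · exact fun p q _ => update_inv i ∅ hμ hS' p q (by simp)
    · exact fun p q _ => update_inv j ∅ hμ hS' p q (by simp)
  · push_neg at hcase
    have hiS : i ∈ S := by
      by_contra h
      exact absurd (hS i j h) (not_le.mpr hcase)
    have hjS : j ∈ S := by
      by_contra h
      have := hS j i h
      rw [norm_sub_rev] at this
      exact absurd this (not_le.mpr hcase)
    rcases hw with rfl | rfl
    · exact ⟨S.erase i, by rw [Finset.card_erase_of_mem hiS],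
        update_inv i S hμ hS⟩
    · exact ⟨S.erase j, by rw [Finset.card_erase_of_mem hjS],
        update_inv j S hμ hS⟩

lemma block {m : ℕ} (τ : ℕ → Fin (m+1) → EuclideanSpace ℝ (Fin n))
    (hb : ∀ k < m, Bisect (τ k) (τ (k+1))) {d : ℝ}
    (hd : ∀ p q, ‖τ 0 p - τ 0 q‖ ≤ d) :
    ∀ p q, ‖τ m p - τ m q‖ ≤ Real.sqrt 3 / 2 * d := by
  have hd0 : 0 ≤ d := by simpa using hd 0 0
  have key : ∀ k, k ≤ m → (∀ p q, ‖τ k p - τ k q‖ ≤ d) ∧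
      ∃ S : Finset (Fin (m+1)), S.card ≤ m + 1 - k ∧
        ∀ p q, p ∉ S → ‖τ k p - τ k q‖ ≤ Real.sqrt 3 / 2 * d := by
    intro k
    induction k with
    | zero =>
      intro _
      exact ⟨hd, Finset.univ, by simp, fun p q hp => absurd (Finset.mem_univ p) hp⟩
    | succ k ih =>
      intro hk
      obtain ⟨h1, S, hScard, hS⟩ := ih (by omega)
      have hbk := hb k (by omega)
      obtain ⟨T, hT1, hT2⟩ := bisect_key hbk h1 S hS
      exact ⟨bisect_mono hbk h1, T, by omega, hT2⟩
  obtain ⟨h1, S, hScard, hS⟩ := key m le_rfl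
  intro p q
  by_cases hp : p ∈ S
  · by_cases hq : q ∈ S
    · have : p = q := Finset.card_le_one.mp (by omega) p hp q hq
      subst this
      simp only [sub_self, norm_zero]
      positivity
    · rw [norm_sub_rev]; exact hS q p hq
  · exact hS p q hp

lemma bary {m : ℕ} (v : Fin (m+1) → EuclideanSpace ℝ (Fin n)) {c : ℝ}
    (h : ∀ i j, ‖v i - v j‖ ≤ c) :
    ∀ x ∈ convexHull ℝ (Set.range v),
      ‖x - (((m:ℝ)+1)⁻¹ • ∑ j, v j)‖ ≤ (m : ℝ)/((m:ℝ)+1) * c := by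
  set κ := ((m:ℝ)+1)⁻¹ • ∑ j, v j with hκ
  have hm1 : ((m:ℝ)+1) ≠ 0 := by positivity
  have key : ∀ j, ‖v j - κ‖ ≤ (m:ℝ)/((m:ℝ)+1) * c := by
    intro j
    have hsum : ∑ i : Fin (m+1), (v j - v i) = ((m:ℝ)+1) • v j - ∑ i, v i := by
      rw [Finset.sum_sub_distrib, Finset.sum_const, Finset.card_univ, Fintype.card_fin]
      congr 1
      rw [← Nat.cast_smul_eq_nsmul ℝ]
      push_cast
      ring_nf
    have h1 : v j - κ = ((m:ℝ)+1)⁻¹ • ∑ i : Fin (m+1), (v j - v i) := by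
      rw [hsum, smul_sub, smul_smul, inv_mul_cancel₀ hm1, one_smul, hκ]
    have hsum2 : ‖∑ i : Fin (m+1), (v j - v i)‖ ≤ (m:ℝ) * c := by
      calc ‖∑ i : Fin (m+1), (v j - v i)‖ ≤ ∑ i : Fin (m+1), ‖v j - v i‖ :=
            norm_sum_le _ _
        _ = ∑ i ∈ Finset.univ.erase j, ‖v j - v i‖ := by
            rw [← Finset.add_sum_erase _ _ (Finset.mem_univ j), sub_self, norm_zero, zero_add]
        _ ≤ (Finset.univ.erase j).card • c :=
            Finset.sum_le_card_nsmul _ _ _ (fun i _ => h j i)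
        _ = (m:ℝ) * c := by
            rw [Finset.card_erase_of_mem (Finset.mem_univ j), Finset.card_univ,
              Fintype.card_fin, Nat.add_sub_cancel, nsmul_eq_mul]
    calc ‖v j - κ‖ = ((m:ℝ)+1)⁻¹ * ‖∑ i : Fin (m+1), (v j - v i)‖ := by
          rw [h1, norm_smul, Real.norm_eq_abs, abs_of_nonneg (by positivity)]
      _ ≤ ((m:ℝ)+1)⁻¹ * ((m:ℝ) * c) := by
          apply mul_le_mul_of_nonneg_left hsum2 (by positivity)
      _ = (m:ℝ)/((m:ℝ)+1) * c := by ring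
  intro x hx
  have hsub : convexHull ℝ (Set.range v) ⊆
      Metric.closedBall κ ((m:ℝ)/((m:ℝ)+1) * c) := by
    apply convexHull_min _ (convex_closedBall _ _)
    rintro _ ⟨j, rfl⟩
    rw [Metric.mem_closedBall, dist_eq_norm]
    exact key j
  have := hsub hx
  rwa [Metric.mem_closedBall, dist_eq_norm] at this

end Aux

/-- Every point of a simplex obtained after p longest-edge bisections is within
(m/(m+1))·(√3/2)^⌊p/m⌋·diam(σ₀) of its barycenter. -/
theorem bisection_barycenter_bound (n m : ℕ) (hm : 0 < m) (p : ℕ)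
    (σ : ℕ → Fin (m + 1) → EuclideanSpace ℝ (Fin n))
    (hbis : ∀ k < p, Bisect (σ k) (σ (k + 1)))
    (κp : EuclideanSpace ℝ (Fin n)) (hκp : κp = ((m : ℝ) + 1)⁻¹ • ∑ j, σ p j) :
    ∀ x ∈ convexHull ℝ (Set.range (σ p)),
      ‖x - κp‖ ≤ ((m : ℝ) / ((m : ℝ) + 1)) * (Real.sqrt 3 / 2) ^ (p / m) *
        Metric.diam (Set.range (σ 0)) := by
  set d₀ := Metric.diam (Set.range (σ 0)) with hd₀
  have hbound0 : ∀ i j, ‖σ 0 i - σ 0 j‖ ≤ d₀ := by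
    intro i j
    rw [← dist_eq_norm]
    exact Metric.dist_le_diam_of_mem ((Set.finite_range _).isBounded) ⟨i, rfl⟩ ⟨j, rfl⟩
  -- bound after q full blocks of m bisections
  have hblocks : ∀ q, q * m ≤ p →
      ∀ i j, ‖σ (q * m) i - σ (q * m) j‖ ≤ (Real.sqrt 3 / 2) ^ q * d₀ := by
    intro q
    induction q with
    | zero => intro _ i j; simpa using hbound0 i j
    | succ q ih =>
      intro hq
      have hqm : (q + 1) * m = q * m + m := Nat.succ_mul q m
      have hprev := ih (by omega)
      have hblk := block (fun k => σ (q * m + k))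
        (fun k hk => hbis (q * m + k) (by omega)) hprev
      intro i j
      have := hblk i j
      rw [hqm]
      calc ‖σ (q * m + m) i - σ (q * m + m) j‖
          ≤ Real.sqrt 3 / 2 * ((Real.sqrt 3 / 2) ^ q * d₀) := this
        _ = (Real.sqrt 3 / 2) ^ (q + 1) * d₀ := by ring
  -- monotone steps from the last full block to p
  have hmono : ∀ (c : ℝ) (a b : ℕ), a ≤ b → b ≤ p →
      (∀ i j, ‖σ a i - σ a j‖ ≤ c) → ∀ i j, ‖σ b i - σ b j‖ ≤ c := by
    intro c a b hab hbp h
    induction b, hab using Nat.le_induction with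
    | base => exact h
    | succ b hab ih => exact bisect_mono (hbis b (by omega)) (ih (by omega))
  have hp2 : (p / m) * m ≤ p := Nat.div_mul_le_self p m
  have hfin : ∀ i j, ‖σ p i - σ p j‖ ≤ (Real.sqrt 3 / 2) ^ (p / m) * d₀ :=
    hmono _ ((p / m) * m) p hp2 le_rfl (hblocks (p / m) hp2)
  intro x hx
  subst hκp
  calc ‖x - ((m : ℝ) + 1)⁻¹ • ∑ j, σ p j‖
      ≤ (m : ℝ) / ((m : ℝ) + 1) * ((Real.sqrt 3 / 2) ^ (p / m) * d₀) :=
        bary (σ p) hfin x hx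
    _ = ((m : ℝ) / ((m : ℝ) + 1)) * (Real.sqrt 3 / 2) ^ (p / m) * d₀ := by ring
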